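/- Let $\Omega$ be a real symmetric $n\times n$ matrix with zero diagonal, and let $(i_1,i_2,i_3)$ be vertices with $\omega_{i_1 i_2} > 0$ and $\omega_{i_2 i_3} > 0$. Write $p_{i\gets j}$ for left multiplication by $Q_{i\gets j} = I - \omega_{ij}^{-1}T_{ji}\Omega$. Then the image of the composition $p_{i_3\gets i_2}\circ p_{i_2\gets i_1}$ equals $(e_{i_2}^T\Omega)^\perp \cap (e_{i_3}^T\Omega)^\perp$, a subspace of codimension 2; more generally, for any path $(i_1,\dots,i_m)$ in the support graph of $\Omega$ with $m \ge 3$, the image of $p_{i_m\gets i_{m-1}}\circ\cdots\circ p_{i_2\gets i_1}$ is $(e_{i_{m-1}}^T\Omega)^\perp \cap (e_{i_m}^T\Omega)^\perp$. -/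

import Mathlib

open Matrix

section Aux
variable {n : ℕ} (Ω : Matrix (Fin n) (Fin n) ℝ)

lemma stmt18_Q_mulVec (a b : Fin n) (x : Fin n → ℝ) :
    (1 - (Ω a b)⁻¹ • (Matrix.single b a 1 * Ω)) *ᵥ x
      = x - ((Ω a b)⁻¹ * (Ω *ᵥ x) a) • (Pi.single b 1 : Fin n → ℝ) := by
  rw [Matrix.sub_mulVec, Matrix.one_mulVec, Matrix.smul_mulVec,
    ← Matrix.mulVec_mulVec, Matrix.single_mulVec]
  funext i
  rcases eq_or_ne i b with rfl | h
  · simp [mul_comm]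
  · simp [Function.update_apply, Pi.single_apply, h]

lemma stmt18_omega (a b i : Fin n) (x : Fin n → ℝ) :
    (Ω *ᵥ ((1 - (Ω a b)⁻¹ • (Matrix.single b a 1 * Ω)) *ᵥ x)) i
      = (Ω *ᵥ x) i - (Ω a b)⁻¹ * (Ω *ᵥ x) a * Ω i b := by
  rw [stmt18_Q_mulVec, Matrix.mulVec_sub, Matrix.mulVec_smul]
  simp

lemma stmt18_fix (a b : Fin n) (x : Fin n → ℝ) (hx : (Ω *ᵥ x) a = 0) :
    (1 - (Ω a b)⁻¹ • (Matrix.single b a 1 * Ω)) *ᵥ x = x := by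
  rw [stmt18_Q_mulVec, hx]
  simp

end Aux

theorem stmt18 {n : ℕ} (Ω : Matrix (Fin n) (Fin n) ℝ) (hsymm : Ω.IsSymm)
    (hdiag : ∀ k, Ω k k = 0) (m : ℕ) (hm : 3 ≤ m) (γ : ℕ → Fin n)
    (hpath : ∀ k, k + 1 < m → 0 < Ω (γ k) (γ (k + 1))) :
    let Q : Fin n → Fin n → Matrix (Fin n) (Fin n) ℝ := fun a b =>
      1 - (Ω a b)⁻¹ • (Matrix.single b a 1 * Ω)
    let P := ((List.range (m - 1)).map (fun k => Q (γ (k + 1)) (γ k))).reverse.prod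
    LinearMap.range P.mulVecLin
        = LinearMap.ker (Matrix.of ![Ω (γ (m - 2)), Ω (γ (m - 1))]).mulVecLin ∧
      Module.finrank ℝ (LinearMap.range P.mulVecLin) = n - 2 := by
  intro Q P
  have hsym : ∀ a b : Fin n, Ω a b = Ω b a := fun a b => (hsymm.apply b a)
  -- the partial products
  set f : ℕ → Matrix (Fin n) (Fin n) ℝ := fun k => Q (γ (k + 1)) (γ k) with hf
  have hPsucc : ∀ j : ℕ, ((List.range (j + 1)).map f).reverse.prod
      = f j * ((List.range j).map f).reverse.prod := by
    intro j
    rw [List.range_succ, List.map_append, List.reverse_append]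
    simp
  -- membership in range of a product
  have hmem : ∀ (A B : Matrix (Fin n) (Fin n) ℝ) (x : Fin n → ℝ),
      x ∈ LinearMap.range (A * B).mulVecLin ↔
        ∃ y ∈ LinearMap.range B.mulVecLin, A *ᵥ y = x := by
    intro A B x
    constructor
    · rintro ⟨z, rfl⟩
      exact ⟨B *ᵥ z, ⟨z, rfl⟩, by simp [Matrix.mulVecLin_apply, Matrix.mulVec_mulVec]⟩
    · rintro ⟨y, ⟨z, rfl⟩, rfl⟩
      exact ⟨z, by simp [Matrix.mulVecLin_apply, Matrix.mulVec_mulVec]⟩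
  -- main induction
  have key : ∀ j : ℕ, 2 ≤ j → j ≤ m - 1 → ∀ x : Fin n → ℝ,
      (x ∈ LinearMap.range (((List.range j).map f).reverse.prod).mulVecLin ↔
        (Ω *ᵥ x) (γ (j - 1)) = 0 ∧ (Ω *ᵥ x) (γ j) = 0) := by
    intro j hj
    induction j, hj using Nat.le_induction with
    | base =>
      intro hjm x
      have h01 : Ω (γ 0) (γ 1) > 0 := hpath 0 (by omega)
      have h12 : Ω (γ 1) (γ 2) > 0 := hpath 1 (by omega)
      have hP2 : ((List.range 2).map f).reverse.prod = f 1 * f 0 := by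
        simp [List.range_succ]
      rw [hP2, hmem]
      constructor
      · rintro ⟨y, ⟨z, rfl⟩, rfl⟩
        have hy : (Ω *ᵥ (f 0 *ᵥ z)) (γ 1) = 0 := by
          rw [hf]; simp only [Q]
          rw [stmt18_omega]
          field_simp [hsym (γ 1) (γ 0), ne_of_gt h01]
          ring
        simp only [Matrix.mulVecLin_apply]
        constructor
        · rw [hf]; simp only [Q]
          rw [stmt18_omega, hdiag (γ 1)]
          simpa using hy
        · rw [hf]; simp only [Q]
          rw [stmt18_omega]
          field_simp [hsym (γ 2) (γ 1), ne_of_gt h12]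
          ring
      · rintro ⟨h1, h2⟩
        refine ⟨x, ⟨x, ?_⟩, ?_⟩
        · simp only [Matrix.mulVecLin_apply, hf, Q]
          exact stmt18_fix Ω _ _ x h1
        · simp only [hf, Q]
          exact stmt18_fix Ω _ _ x h2
    | succ j hj ih =>
      intro hjm x
      have ih' := ih (by omega)
      have hjj : Ω (γ j) (γ (j + 1)) > 0 := hpath j (by omega)
      have hj1j : Ω (γ (j - 1)) (γ j) > 0 := by
        have := hpath (j - 1) (by omega)
        have hjr : j - 1 + 1 = j := by omega
        rwa [hjr] at this
      rw [hPsucc, hmem]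
      constructor
      · rintro ⟨y, hy, rfl⟩
        obtain ⟨hy1, hy2⟩ := (ih' y).1 hy
        constructor
        · show (Ω *ᵥ _) (γ (j + 1 - 1)) = 0
          simp only [Nat.add_sub_cancel]
          rw [hf]; simp only [Q]
          rw [stmt18_omega, hdiag (γ j), hy2]
          ring
        · rw [hf]; simp only [Q]
          rw [stmt18_omega]
          field_simp [hsym (γ (j + 1)) (γ j), ne_of_gt hjj]
          ring
      · rintro ⟨h1, h2⟩
        simp only [Nat.add_sub_cancel] at h1
        set t : ℝ := -(Ω (γ (j - 1)) (γ j))⁻¹ * (Ω *ᵥ x) (γ (j - 1)) with ht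
        set y : Fin n → ℝ := x + t • (Pi.single (γ j) 1 : Fin n → ℝ) with hy
        have hΩy : ∀ i : Fin n, (Ω *ᵥ y) i = (Ω *ᵥ x) i + t * Ω i (γ j) := by
          intro i
          rw [hy, Matrix.mulVec_add, Matrix.mulVec_smul]
          simp
        have hy1 : (Ω *ᵥ y) (γ (j - 1)) = 0 := by
          rw [hΩy, ht]
          field_simp [ne_of_gt hj1j]
          ring
        have hy2 : (Ω *ᵥ y) (γ j) = 0 := by
          rw [hΩy, hdiag (γ j), h1]; ring
        refine ⟨y, (ih' y).2 ⟨hy1, hy2⟩, ?_⟩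
        rw [hf]; simp only [Q]
        rw [stmt18_Q_mulVec]
        have hc : ((Ω (γ (j + 1)) (γ j))⁻¹ * (Ω *ᵥ y) (γ (j + 1))) = t := by
          rw [hΩy, h2]
          field_simp [hsym (γ (j + 1)) (γ j), ne_of_gt hjj]
          ring
        rw [hc, hy]
        abel
  -- assemble
  have hγne : γ (m - 2) ≠ γ (m - 1) := by
    intro h
    have hpos : 0 < Ω (γ (m - 2)) (γ (m - 1)) := by
      have := hpath (m - 2) (by omega)
      have h2 : m - 2 + 1 = m - 1 := by omega
      rwa [h2] at this
    rw [h, hdiag] at hpos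
    exact lt_irrefl _ hpos
  have hw : 0 < Ω (γ (m - 2)) (γ (m - 1)) := by
    have := hpath (m - 2) (by omega)
    have h2 : m - 2 + 1 = m - 1 := by omega
    rwa [h2] at this
  set M : Matrix (Fin 2) (Fin n) ℝ := Matrix.of ![Ω (γ (m - 2)), Ω (γ (m - 1))] with hM
  have hMx : ∀ (x : Fin n → ℝ), x ∈ LinearMap.ker M.mulVecLin ↔
      (Ω *ᵥ x) (γ (m - 2)) = 0 ∧ (Ω *ᵥ x) (γ (m - 1)) = 0 := by
    intro x
    rw [LinearMap.mem_ker, Matrix.mulVecLin_apply, funext_iff, Fin.forall_fin_two]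
    rfl
  have hrange : LinearMap.range P.mulVecLin = LinearMap.ker M.mulVecLin := by
    ext x
    have hk := key (m - 1) (by omega) le_rfl x
    have h1 : m - 1 - 1 = m - 2 := by omega
    rw [h1] at hk
    rw [hMx x]
    exact hk
  refine ⟨hrange, ?_⟩
  rw [hrange]
  -- surjectivity of M.mulVecLin
  have hsurj : Function.Surjective M.mulVecLin := by
    intro v
    refine ⟨((Ω (γ (m - 2)) (γ (m - 1)))⁻¹ * v 1) • (Pi.single (γ (m - 2)) 1 : Fin n → ℝ)
      + ((Ω (γ (m - 2)) (γ (m - 1)))⁻¹ * v 0) • (Pi.single (γ (m - 1)) 1 : Fin n → ℝ), ?_⟩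
    rw [Matrix.mulVecLin_apply, Matrix.mulVec_add, Matrix.mulVec_smul, Matrix.mulVec_smul]
    funext i
    fin_cases i <;>
      simp [hM, Matrix.vecHead, Matrix.vecTail, hdiag, hsym (γ (m - 1)) (γ (m - 2))] <;>
      field_simp
  have hrn := LinearMap.finrank_range_add_finrank_ker M.mulVecLin
  rw [LinearMap.range_eq_top.2 hsurj, finrank_top] at hrn
  simp only [Module.finrank_pi, Fintype.card_fin] at hrn ⊢
  omega
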